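/- Fix G₁₃ with 1/2 < G₁₃ ≤ 1. On the open interval G₂₃ ∈ (1 − G₁₃, G₁₃): (i) the function r₂₃(G₂₃) = G₁₃·(G₂₃ + 1 − G₁₃)/(G₂₃ + G₁₃ − 1) is strictly decreasing, with derivative −2G₁₃(1 − G₁₃)/(G₂₃ + G₁₃ − 1)² ≤ 0 and strictly negative when G₁₃ < 1; and (ii) the function r₁₃(G₂₃) = G₂₃·(G₁₃ + 1 − G₂₃)/(G₂₃ + G₁₃ − 1) is strictly decreasing. -/

import Mathlib

/-- on `G₂₃ ∈ (1 − G₁₃, G₁₃)` with `1/2 < G₁₃ ≤ 1`: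
(i) `r₂₃(x) = G₁₃·(x + 1 − G₁₃)/(x + G₁₃ − 1)` has derivative
`−2G₁₃(1 − G₁₃)/(x + G₁₃ − 1)² ≤ 0`, strictly negative when `G₁₃ < 1`, and is then
strictly decreasing; (ii) `r₁₃(x) = x·(G₁₃ + 1 − x)/(x + G₁₃ − 1)` is strictly
decreasing. -/
theorem statement_14 (g13 : ℝ) (h1 : 1 / 2 < g13) (h2 : g13 ≤ 1) :
    (∀ x ∈ Set.Ioo (1 - g13) g13,
      HasDerivAt (fun y : ℝ => g13 * (y + 1 - g13) / (y + g13 - 1))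
        (-(2 * g13 * (1 - g13)) / (x + g13 - 1) ^ 2) x ∧
      -(2 * g13 * (1 - g13)) / (x + g13 - 1) ^ 2 ≤ 0 ∧
      (g13 < 1 → -(2 * g13 * (1 - g13)) / (x + g13 - 1) ^ 2 < 0)) ∧
    (g13 < 1 →
      StrictAntiOn (fun y : ℝ => g13 * (y + 1 - g13) / (y + g13 - 1))
        (Set.Ioo (1 - g13) g13)) ∧
    StrictAntiOn (fun y : ℝ => y * (g13 + 1 - y) / (y + g13 - 1))
      (Set.Ioo (1 - g13) g13) := by
  have hg : 0 < g13 := by linarith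
  refine ⟨?_, ?_, ?_⟩
  · rintro x ⟨hx1, hx2⟩
    have hden : 0 < x + g13 - 1 := by linarith
    have hden' : x + g13 - 1 ≠ 0 := ne_of_gt hden
    constructor
    · have hf : HasDerivAt (fun y : ℝ => g13 * (y + 1 - g13)) g13 x := by
        have := ((hasDerivAt_id x).add_const (1 - g13)).const_mul g13
        convert this using 2 <;> (try rfl) <;> (try simp only [id_eq]) <;> ring
      have hgd : HasDerivAt (fun y : ℝ => y + g13 - 1) 1 x := by
        have := (hasDerivAt_id x).add_const (g13 - 1)
        convert this using 2 <;> (try rfl) <;> (try simp only [id_eq]) <;> ring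
      have := hf.div hgd hden'
      refine this.congr_deriv ?_
      field_simp
      ring
    · constructor
      · apply div_nonpos_of_nonpos_of_nonneg
        · nlinarith
        · positivity
      · intro hlt
        apply div_neg_of_neg_of_pos
        · nlinarith
        · positivity
  · intro hlt
    rintro x ⟨hx1, hx2⟩ y ⟨hy1, hy2⟩ hxy
    have hdx : 0 < x + g13 - 1 := by linarith
    have hdy : 0 < y + g13 - 1 := by linarith
    simp only
    rw [div_lt_div_iff₀ hdy hdx]
    nlinarith [mul_pos (mul_pos hg (sub_pos.2 hlt)) (sub_pos.2 hxy)]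
  · rintro x ⟨hx1, hx2⟩ y ⟨hy1, hy2⟩ hxy
    have hdx : 0 < x + g13 - 1 := by linarith
    have hdy : 0 < y + g13 - 1 := by linarith
    simp only
    rw [div_lt_div_iff₀ hdy hdx]
    have hx0 : 0 < x := by linarith
    have hy0 : 0 < y := by linarith
    nlinarith [mul_pos (sub_pos.2 hxy) (mul_pos hx0 hy0),
      mul_nonneg (mul_nonneg (sub_pos.2 hxy).le (by linarith : (0:ℝ) ≤ 1 - g13)) (by linarith : (0:ℝ) ≤ g13 + 1 - x - y)]
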